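/- Let G be a group acting measurably on a standard Borel space X, and ρ a positive cocycle measurable in x for each g. A probability measure ν with Radon–Nikodym cocycle ρ is strongly indecomposable (i.e. ν = αν₁ + (1-α)ν₂ with α ∈ (0,1) and ν₁, ν₂ having cocycle ρ implies ν = ν₁ = ν₂) if and only if it is weakly indecomposable (every Borel set A with ν(A △ T_g A) = 0 for all g ∈ G has ν(A) ∈ {0,1}). -/

import Mathlib

open MeasureTheory Set Filter
open scoped ENNReal

/-- Auxiliary: if ν is weakly indecomposable and ν' is a probability measure with
the same cocycle which is absolutely continuous w.r.t. ν, then ν' = ν. -/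
theorem stmt3_aux {G X : Type*} [Group G] [MeasurableSpace X] [StandardBorelSpace X]
    (T : G → X → X) (hTmeas : ∀ g, Measurable (T g))
    (hTbij : ∀ g, Function.Bijective (T g))
    (hT1 : ∀ x, T 1 x = x) (hTmul : ∀ g h x, T (g * h) x = T g (T h x))
    (ρ : G → X → ℝ) (hρmeas : ∀ g, Measurable (ρ g)) (hρpos : ∀ g x, 0 < ρ g x)
    (ν : Measure X) [IsProbabilityMeasure ν]
    (hν : ∀ g, ∀ A : Set X, MeasurableSet A →
      ν (T g '' A) = ∫⁻ x in A, ENNReal.ofReal (ρ g x) ∂ν)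
    (weak : ∀ A : Set X, MeasurableSet A →
        (∀ g, ν (symmDiff A (T g '' A)) = 0) → ν A = 0 ∨ ν A = 1)
    (ν' : Measure X) [IsProbabilityMeasure ν']
    (hν' : ∀ g, ∀ A : Set X, MeasurableSet A →
      ν' (T g '' A) = ∫⁻ x in A, ENNReal.ofReal (ρ g x) ∂ν')
    (hac : ν' ≪ ν) : ν' = ν := by
  -- basic facts about the action
  have hTinv : ∀ (g : G) (x : X), T g⁻¹ (T g x) = x := by
    intro g x; rw [← hTmul, inv_mul_cancel, hT1]
  have hTinv' : ∀ (g : G) (x : X), T g (T g⁻¹ x) = x := by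
    intro g x; rw [← hTmul, mul_inv_cancel, hT1]
  have hTemb : ∀ g, MeasurableEmbedding (T g) := fun g =>
    (hTmeas g).measurableEmbedding (hTbij g).1
  set f : X → ℝ≥0∞ := ν'.rnDeriv ν with hf
  have hfmeas : Measurable f := Measure.measurable_rnDeriv _ _
  have hfd : ν.withDensity f = ν' := Measure.withDensity_rnDeriv_eq ν' ν hac
  have hint : ∫⁻ x, f x ∂ν = 1 := by
    have := congrArg (fun μ : Measure X => μ univ) hfd
    simpa [withDensity_apply f MeasurableSet.univ] using this
  -- the measure ν is the image of ρ_g • ν under T g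
  have hmap : ∀ g : G, Measure.map (T g)
      (ν.withDensity (fun x => ENNReal.ofReal (ρ g x))) = ν := by
    intro g
    ext S hS
    rw [Measure.map_apply (hTmeas g) hS,
      withDensity_apply _ ((hTmeas g) hS), ← hν g _ ((hTmeas g) hS),
      Set.image_preimage_eq S (hTbij g).2]
  -- invariance of the Radon-Nikodym derivative
  have h_inv : ∀ g : G, (fun x => f (T g x)) =ᵐ[ν] f := by
    intro g
    set w : X → ℝ≥0∞ := fun x => ENNReal.ofReal (ρ g x) with hw
    have hwmeas : Measurable w := (hρmeas g).ennreal_ofReal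
    have key : ∀ B : Set X, MeasurableSet B →
        ∫⁻ x in B, f (T g x) * w x ∂ν = ∫⁻ x in B, f x * w x ∂ν := by
      intro B hB
      have h1 : ∫⁻ y in T g '' B, f y ∂ν = ∫⁻ x in B, f (T g x) * w x ∂ν := by
        conv_lhs => rw [← hmap g]
        rw [setLIntegral_map ((hTemb g).measurableSet_image.2 hB) hfmeas (hTmeas g),
          Set.preimage_image_eq B (hTbij g).1, restrict_withDensity hB,
          lintegral_withDensity_eq_lintegral_mul _ hwmeas
            (show Measurable fun x => f (T g x) from hfmeas.comp (hTmeas g))]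
        exact lintegral_congr fun x => mul_comm _ _
      have h2 : ∫⁻ y in T g '' B, f y ∂ν = ν' (T g '' B) := by
        rw [← hfd, withDensity_apply f ((hTemb g).measurableSet_image.2 hB)]
      have h3 : ν' (T g '' B) = ∫⁻ x in B, w x ∂ν' := hν' g B hB
      have h4 : ∫⁻ x in B, w x ∂ν' = ∫⁻ x in B, f x * w x ∂ν := by
        rw [← hfd, restrict_withDensity hB,
          lintegral_withDensity_eq_lintegral_mul _ hfmeas hwmeas]
        rfl
      rw [← h1, h2, h3, h4]
    have hfeq : (fun x => f (T g x) * w x) =ᵐ[ν] fun x => f x * w x := by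
      refine ae_eq_of_forall_setLIntegral_eq_of_sigmaFinite
        ((hfmeas.comp (hTmeas g)).mul hwmeas) (hfmeas.mul hwmeas) ?_
      intro s hs _
      exact key s hs
    filter_upwards [hfeq] with x hx
    exact (ENNReal.mul_left_inj (by simpa [hw] using (hρpos g x))
      ENNReal.ofReal_ne_top).mp hx
  -- level sets are almost invariant
  have hquasi : ∀ (S : Set ℝ≥0∞), MeasurableSet S → ν (f ⁻¹' S) = 0 ∨ ν (f ⁻¹' S) = 1 := by
    intro S hS
    refine weak _ (hfmeas hS) ?_
    intro g
    have himg : T g '' (f ⁻¹' S) = {y | f (T g⁻¹ y) ∈ S} := by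
      ext y
      constructor
      · rintro ⟨x, hx, rfl⟩; simpa [hTinv g x] using hx
      · intro hy; exact ⟨T g⁻¹ y, hy, hTinv' g y⟩
    have hnull : ν {y | f (T g⁻¹ y) ≠ f y} = 0 := by
      have := h_inv g⁻¹
      exact this
    refine measure_mono_null ?_ hnull
    intro y hy
    rw [himg] at hy
    simp only [Set.mem_symmDiff, Set.mem_preimage, Set.mem_setOf_eq] at hy
    intro hcontra
    rcases hy with ⟨h1, h2⟩ | ⟨h1, h2⟩
    · exact h2 (hcontra ▸ h1)
    · exact h2 (hcontra.symm ▸ h1)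
  -- f ≤ 1 a.e.
  have hle : f ≤ᵐ[ν] 1 := by
    rcases hquasi (Set.Ioi 1) measurableSet_Ioi with h | h
    · rw [← nonpos_iff_eq_zero] at h
      have : ∀ᵐ x ∂ν, ¬ (1 : ℝ≥0∞) < f x := by
        rw [ae_iff]; simpa [Set.preimage] using h
      filter_upwards [this] with x hx
      exact not_lt.mp hx
    · exfalso
      have hgt : ∀ᵐ x ∂ν, (1 : ℝ≥0∞) < f x := by
        have hc : ν ((f ⁻¹' Set.Ioi 1)ᶜ) = 0 := by
          rw [measure_compl (hfmeas measurableSet_Ioi) (measure_ne_top ν _), h,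
            measure_univ, tsub_self]
        rw [ae_iff]
        convert hc using 2
        ext; simp
      have hone : ∫⁻ x, (1 : ℝ≥0∞) ∂ν = 1 := by simp
      have hsub : ∫⁻ x, (f x - 1) ∂ν = 0 := by
        rw [lintegral_sub measurable_const (by simp [hone])
          (hgt.mono fun x hx => hx.le), hint, hone, tsub_self]
      have : (fun x => f x - 1) =ᵐ[ν] 0 :=
        (lintegral_eq_zero_iff (hfmeas.sub measurable_const)).mp hsub
      have : ∀ᵐ x ∂ν, f x ≤ 1 := by
        filter_upwards [this] with x hx
        exact tsub_eq_zero_iff_le.mp hx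
      have hbad : ∀ᵐ _x ∂ν, False := by
        filter_upwards [this, hgt] with x h1 h2
        exact absurd h1 (not_le.mpr h2)
      have hh := ae_iff.mp hbad
      simp at hh
  -- f ≥ 1 a.e.
  have hge : (fun _ => (1:ℝ≥0∞)) ≤ᵐ[ν] f := by
    rcases hquasi (Set.Iio 1) measurableSet_Iio with h | h
    · have : ∀ᵐ x ∂ν, ¬ f x < 1 := by
        rw [ae_iff]; simpa [Set.preimage] using h
      filter_upwards [this] with x hx
      exact not_lt.mp hx
    · exfalso
      have hlt : ∀ᵐ x ∂ν, f x < 1 := by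
        have hc : ν ((f ⁻¹' Set.Iio 1)ᶜ) = 0 := by
          rw [measure_compl (hfmeas measurableSet_Iio) (measure_ne_top ν _), h,
            measure_univ, tsub_self]
        rw [ae_iff]
        convert hc using 2
        ext; simp
      have hone : ∫⁻ x, (1 : ℝ≥0∞) ∂ν = 1 := by simp
      have hsub : ∫⁻ x, (1 - f x) ∂ν = 0 := by
        rw [lintegral_sub hfmeas (by simp [hint])
          (hlt.mono fun x hx => hx.le), hint, hone, tsub_self]
      have : (fun x => 1 - f x) =ᵐ[ν] 0 :=
        (lintegral_eq_zero_iff (measurable_const.sub hfmeas)).mp hsub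
      have : ∀ᵐ x ∂ν, (1:ℝ≥0∞) ≤ f x := by
        filter_upwards [this] with x hx
        exact tsub_eq_zero_iff_le.mp hx
      have hbad : ∀ᵐ _x ∂ν, False := by
        filter_upwards [this, hlt] with x h1 h2
        exact absurd h1 (not_le.mpr h2)
      have hh := ae_iff.mp hbad
      simp at hh
  have hfeq1 : f =ᵐ[ν] fun _ => (1:ℝ≥0∞) := by
    filter_upwards [hle, hge] with x h1 h2
    exact le_antisymm h1 h2
  calc ν' = ν.withDensity f := hfd.symm
    _ = ν.withDensity (fun _ => 1) := withDensity_congr_ae hfeq1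
    _ = ν := by simp [withDensity_one]


/-- A probability measure with Radon–Nikodym cocycle ρ is strongly indecomposable
iff it is weakly indecomposable. -/
theorem stmt3 {G X : Type*} [Group G] [MeasurableSpace X] [StandardBorelSpace X]
    (T : G → X → X) (hTmeas : ∀ g, Measurable (T g))
    (hTbij : ∀ g, Function.Bijective (T g))
    (hT1 : ∀ x, T 1 x = x) (hTmul : ∀ g h x, T (g * h) x = T g (T h x))
    (ρ : G → X → ℝ) (hρmeas : ∀ g, Measurable (ρ g)) (hρpos : ∀ g x, 0 < ρ g x)
    (hρcoc : ∀ g h x, ρ (g * h) x = ρ g (T h x) * ρ h x)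
    (ν : Measure X) [IsProbabilityMeasure ν]
    (hν : ∀ g, ∀ A : Set X, MeasurableSet A →
      ν (T g '' A) = ∫⁻ x in A, ENNReal.ofReal (ρ g x) ∂ν) :
    (∀ (α : ℝ), α ∈ Set.Ioo (0 : ℝ) 1 → ∀ ν₁ ν₂ : Measure X,
        IsProbabilityMeasure ν₁ → IsProbabilityMeasure ν₂ →
        (∀ g, ∀ A : Set X, MeasurableSet A →
          ν₁ (T g '' A) = ∫⁻ x in A, ENNReal.ofReal (ρ g x) ∂ν₁) →
        (∀ g, ∀ A : Set X, MeasurableSet A →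
          ν₂ (T g '' A) = ∫⁻ x in A, ENNReal.ofReal (ρ g x) ∂ν₂) →
        ν = ENNReal.ofReal α • ν₁ + ENNReal.ofReal (1 - α) • ν₂ →
        ν₁ = ν ∧ ν₂ = ν)
    ↔ (∀ A : Set X, MeasurableSet A →
        (∀ g, ν (symmDiff A (T g '' A)) = 0) → ν A = 0 ∨ ν A = 1) := by
  constructor
  · -- strong → weak
    intro strong A hA hsym
    by_contra hcon
    push_neg at hcon
    obtain ⟨h0, h1⟩ := hcon
    have hAfin : ν A ≠ ∞ := measure_ne_top ν A
    have hAle : ν A ≤ 1 := prob_le_one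
    have hAc0 : ν Aᶜ ≠ 0 := by
      rw [measure_compl hA hAfin, measure_univ]
      intro hc
      exact h1 (by simpa using ((tsub_eq_zero_iff_le.mp hc).antisymm hAle).symm)
    have hAcfin : ν Aᶜ ≠ ∞ := measure_ne_top ν Aᶜ
    set ν₁ : Measure X := (ν A)⁻¹ • ν.restrict A with hν₁def
    set ν₂ : Measure X := (ν Aᶜ)⁻¹ • ν.restrict Aᶜ with hν₂def
    have hp1 : IsProbabilityMeasure ν₁ := by
      constructor
      rw [hν₁def, Measure.smul_apply, Measure.restrict_apply_univ, smul_eq_mul,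
        ENNReal.inv_mul_cancel h0 hAfin]
    have hp2 : IsProbabilityMeasure ν₂ := by
      constructor
      rw [hν₂def, Measure.smul_apply, Measure.restrict_apply_univ, smul_eq_mul,
        ENNReal.inv_mul_cancel hAc0 hAcfin]
    -- cocycle property for restricted normalized measures
    have hcoc : ∀ (S : Set X), MeasurableSet S → (∀ g, ν (symmDiff S (T g '' S)) = 0) →
        ∀ g, ∀ B : Set X, MeasurableSet B →
        ((ν S)⁻¹ • ν.restrict S) (T g '' B) =
          ∫⁻ x in B, ENNReal.ofReal (ρ g x) ∂((ν S)⁻¹ • ν.restrict S) := by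
      intro S hS hSsym g B hB
      have hBimg : MeasurableSet (T g '' B) :=
        ((hTmeas g).measurableEmbedding (hTbij g).1).measurableSet_image.2 hB
      have hae : S =ᵐ[ν] (T g '' S) := measure_symmDiff_eq_zero_iff.mp (hSsym g)
      have h1 : ν (T g '' B ∩ S) = ν (T g '' B ∩ T g '' S) :=
        measure_congr (ae_eq_set_inter (ae_eq_refl _) hae)
      have h2 : T g '' B ∩ T g '' S = T g '' (B ∩ S) :=
        (Set.image_inter (hTbij g).1).symm
      have h3 : ν (T g '' (B ∩ S)) = ∫⁻ x in B ∩ S, ENNReal.ofReal (ρ g x) ∂ν :=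
        hν g (B ∩ S) (hB.inter hS)
      rw [Measure.smul_apply, Measure.restrict_apply hBimg, h1, h2, h3,
        Measure.restrict_smul, lintegral_smul_measure,
        Measure.restrict_restrict hB]
    have hcoc1 := hcoc A hA hsym
    have hsymc : ∀ g, ν (symmDiff Aᶜ (T g '' Aᶜ)) = 0 := by
      intro g
      rw [Set.image_compl_eq (hTbij g)]
      rw [compl_symmDiff_compl]
      exact hsym g
    have hcoc2 := hcoc Aᶜ hA.compl hsymc
    -- the decomposition
    set α : ℝ := (ν A).toReal with hα
    have hαIoo : α ∈ Set.Ioo (0:ℝ) 1 := by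
      constructor
      · exact ENNReal.toReal_pos h0 hAfin
      · rw [hα]
        have : ν A < 1 := lt_of_le_of_ne hAle h1
        calc (ν A).toReal < (1:ℝ≥0∞).toReal := by
              exact ENNReal.toReal_strict_mono (by simp) this
          _ = 1 := by simp
    have hofα : ENNReal.ofReal α = ν A := ENNReal.ofReal_toReal hAfin
    have hofα' : ENNReal.ofReal (1 - α) = ν Aᶜ := by
      rw [measure_compl hA hAfin, measure_univ]
      have h1c : (1 - ν A).toReal = 1 - α := by
        rw [ENNReal.toReal_sub_of_le hAle (by simp)]; simp [hα]
      rw [← h1c, ENNReal.ofReal_toReal (lt_of_le_of_lt tsub_le_self ENNReal.one_lt_top).ne]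
    have hdecomp : ν = ENNReal.ofReal α • ν₁ + ENNReal.ofReal (1 - α) • ν₂ := by
      rw [hofα, hofα', hν₁def, hν₂def, smul_smul, smul_smul,
        ENNReal.mul_inv_cancel h0 hAfin, ENNReal.mul_inv_cancel hAc0 hAcfin,
        one_smul, one_smul, Measure.restrict_add_restrict_compl hA]
    obtain ⟨he1, _⟩ := strong α hαIoo ν₁ ν₂ hp1 hp2 hcoc1 hcoc2 hdecomp
    -- contradiction: ν₁ A = 1 but ν A ≠ 1
    have : ν₁ A = 1 := by
      rw [hν₁def, Measure.smul_apply, Measure.restrict_apply hA, Set.inter_self,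
        smul_eq_mul, ENNReal.inv_mul_cancel h0 hAfin]
    rw [he1] at this
    exact h1 this
  · -- weak → strong
    intro weak α hα ν₁ ν₂ hp1 hp2 hcoc1 hcoc2 hdec
    have hα0 : ENNReal.ofReal α ≠ 0 := by
      simp [ENNReal.ofReal_eq_zero, not_le, hα.1]
    have hα1 : ENNReal.ofReal (1 - α) ≠ 0 := by
      simp only [ENNReal.ofReal_eq_zero, not_le, ne_eq]
      linarith [hα.2]
    have hac1 : ν₁ ≪ ν := by
      intro s hs
      rw [hdec] at hs
      simp only [Measure.add_apply, Measure.smul_apply, smul_eq_mul] at hs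
      rcases (add_eq_zero.mp hs) with ⟨hs1, _⟩
      exact (mul_eq_zero.mp hs1).resolve_left hα0
    have hac2 : ν₂ ≪ ν := by
      intro s hs
      rw [hdec] at hs
      simp only [Measure.add_apply, Measure.smul_apply, smul_eq_mul] at hs
      rcases (add_eq_zero.mp hs) with ⟨_, hs2⟩
      exact (mul_eq_zero.mp hs2).resolve_left hα1
    exact ⟨stmt3_aux T hTmeas hTbij hT1 hTmul ρ hρmeas hρpos ν hν weak ν₁ hcoc1 hac1,
      stmt3_aux T hTmeas hTbij hT1 hTmul ρ hρmeas hρpos ν hν weak ν₂ hcoc2 hac2⟩
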